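/- Let α > 0, λ < 0, and let a, c, d be real numbers with c < 0 < a, d ≥ 0, satisfying 1/α + λ² + a·c − c² = 0. Set ρ₁ = (√(4c(2c−a)+d²)+d)/2 and ρ₂ = (√(4c(2c−a)+d²)−d)/2, and define f : ℝ³ → ℂ⁴ by f(u,v,w) = ( (λ/√(λ²+1/α))·exp(i·u/(αλ)), (1/√(α(c−a)(2c−a)))·exp(−i(λu−(c−a)v)), (1/√(α·ρ₁(ρ₁+ρ₂)))·exp(−i(λu+cv+ρ₁w)), (1/√(α·ρ₂(ρ₁+ρ₂)))·exp(−i(λu+cv−ρ₂w)) ). Then at every point the real inner products of the coordinate partial derivatives are ⟨∂f/∂u, ∂f/∂u⟩_ℝ = ⟨∂f/∂v, ∂f/∂v⟩_ℝ = ⟨∂f/∂w, ∂f/∂w⟩_ℝ = 1/α and ⟨∂f/∂u, ∂f/∂v⟩_ℝ = ⟨∂f/∂u, ∂f/∂w⟩_ℝ = ⟨∂f/∂v, ∂f/∂w⟩_ℝ = 0. In particular the metric induced by f on ℝ³ is a constant multiple of the Euclidean metric, hence flat. -/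

import Mathlib

open scoped ComplexInnerProductSpace

private lemma aux_deriv (C : ℝ) (e : ℂ) (φ : ℝ → ℝ) (k t : ℝ) (h : HasDerivAt φ k t) :
    HasDerivAt (fun t => (C:ℂ) * Complex.exp (e * ((φ t : ℝ) : ℂ)))
      ((C:ℂ) * (e * (k:ℂ)) * Complex.exp (e * ((φ t : ℝ) : ℂ))) t := by
  have h1 : HasDerivAt (fun t : ℝ => ((φ t : ℝ) : ℂ)) (k:ℂ) t := h.ofReal_comp
  have h2 := ((h1.const_mul e).cexp).const_mul (C:ℂ)
  exact h2.congr_deriv (by ring)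

private lemma aux_term (C k k' θ : ℝ) (e : ℂ) (h : e = Complex.I ∨ e = -Complex.I) :
    (starRingEnd ℂ) ((C:ℂ) * (e * (k:ℂ)) * Complex.exp (e * (θ:ℂ))) *
      ((C:ℂ) * (e * (k':ℂ)) * Complex.exp (e * (θ:ℂ))) = ((C^2*k*k' : ℝ) : ℂ) := by
  have hce : (starRingEnd ℂ) e = -e := by rcases h with rfl | rfl <;> simp
  have hee : e * e = -1 := by rcases h with rfl | rfl <;> simp [Complex.I_mul_I]
  have h1 : Complex.exp (-e * (θ:ℂ)) * Complex.exp (e * (θ:ℂ)) = 1 := by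
    rw [← Complex.exp_add]; ring_nf; exact Complex.exp_zero
  rw [map_mul, map_mul, ← Complex.exp_conj]
  simp only [map_mul, hce, Complex.conj_ofReal]
  calc (C:ℂ) * (-e * k) * Complex.exp (-e * θ) * ((C:ℂ) * (e * k') * Complex.exp (e * θ))
      = ((C:ℂ)*C*k*k') * (-(e*e)) * (Complex.exp (-e*θ) * Complex.exp (e*θ)) := by ring
    _ = ((C^2*k*k' : ℝ) : ℂ) := by rw [hee, h1]; push_cast; ring

private lemma inner_vec (x0 x1 x2 x3 y0 y1 y2 y3 : ℂ) :
    (⟪(WithLp.equiv 2 (Fin 4 → ℂ)).symm ![x0,x1,x2,x3],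
      (WithLp.equiv 2 (Fin 4 → ℂ)).symm ![y0,y1,y2,y3]⟫ : ℂ)
    = (starRingEnd ℂ) x0 * y0 + (starRingEnd ℂ) x1 * y1
      + (starRingEnd ℂ) x2 * y2 + (starRingEnd ℂ) x3 * y3 := by
  simp [PiLp.inner_apply, RCLike.inner_apply, Fin.sum_univ_four]
  ring

private lemma L1 (p q r : ℝ) : HasDerivAt (fun t : ℝ => p*t - q) p r := by
  simpa using ((hasDerivAt_id r).const_mul p).sub_const q

private lemma L2 (p q1 q2 r : ℝ) : HasDerivAt (fun t : ℝ => p*t + q1 + q2) p r := by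
  simpa using (((hasDerivAt_id r).const_mul p).add_const q1).add_const q2

private lemma L3 (p q1 q2 r : ℝ) : HasDerivAt (fun t : ℝ => p*t + q1 - q2) p r := by
  simpa using (((hasDerivAt_id r).const_mul p).add_const q1).sub_const q2

private lemma L4 (p q r : ℝ) : HasDerivAt (fun t : ℝ => q - p*t) (-p) r := by
  simpa using ((hasDerivAt_id r).const_mul p).const_sub q

private lemma L5 (p q1 q2 r : ℝ) : HasDerivAt (fun t : ℝ => q1 + p*t + q2) p r := by
  simpa using (((hasDerivAt_id r).const_mul p).const_add q1).add_const q2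

private lemma L6 (p q1 q2 r : ℝ) : HasDerivAt (fun t : ℝ => q1 + p*t - q2) p r := by
  simpa using (((hasDerivAt_id r).const_mul p).const_add q1).sub_const q2

private lemma L7 (p q r : ℝ) : HasDerivAt (fun t : ℝ => q + p*t) p r := by
  simpa using ((hasDerivAt_id r).const_mul p).const_add q

set_option maxHeartbeats 2000000 in
/-- the induced metric of f is (1/α) times the Euclidean metric, hence flat. -/
theorem stmt_4 (α lam a c d : ℝ) (hα : 0 < α) (hlam : lam < 0)
    (hc : c < 0) (ha : 0 < a) (hd : 0 ≤ d)
    (hrel : 1/α + lam^2 + a*c - c^2 = 0)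
    (ρ₁ ρ₂ : ℝ)
    (hρ₁ : ρ₁ = (Real.sqrt (4*c*(2*c - a) + d^2) + d)/2)
    (hρ₂ : ρ₂ = (Real.sqrt (4*c*(2*c - a) + d^2) - d)/2)
    (f : ℝ → ℝ → ℝ → EuclideanSpace ℂ (Fin 4))
    (hf : ∀ u v w : ℝ, f u v w = (WithLp.equiv 2 (Fin 4 → ℂ)).symm
      ![((lam / Real.sqrt (lam^2 + 1/α) : ℝ) : ℂ)
          * Complex.exp (Complex.I * ((u/(α*lam) : ℝ) : ℂ)),
        ((1 / Real.sqrt (α*(c - a)*(2*c - a)) : ℝ) : ℂ)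
          * Complex.exp (-Complex.I * ((lam*u - (c - a)*v : ℝ) : ℂ)),
        ((1 / Real.sqrt (α*ρ₁*(ρ₁ + ρ₂)) : ℝ) : ℂ)
          * Complex.exp (-Complex.I * ((lam*u + c*v + ρ₁*w : ℝ) : ℂ)),
        ((1 / Real.sqrt (α*ρ₂*(ρ₁ + ρ₂)) : ℝ) : ℂ)
          * Complex.exp (-Complex.I * ((lam*u + c*v - ρ₂*w : ℝ) : ℂ))]) :
    ∀ u v w : ℝ,
      (⟪deriv (fun t => f t v w) u, deriv (fun t => f t v w) u⟫).re = 1/α ∧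
      (⟪deriv (fun t => f u t w) v, deriv (fun t => f u t w) v⟫).re = 1/α ∧
      (⟪deriv (fun t => f u v t) w, deriv (fun t => f u v t) w⟫).re = 1/α ∧
      (⟪deriv (fun t => f t v w) u, deriv (fun t => f u t w) v⟫).re = 0 ∧
      (⟪deriv (fun t => f t v w) u, deriv (fun t => f u v t) w⟫).re = 0 ∧
      (⟪deriv (fun t => f u t w) v, deriv (fun t => f u v t) w⟫).re = 0 := by
  intro u v w
  -- basic positivity facts
  have hα0 : α ≠ 0 := hα.ne'
  have hlam0 : lam ≠ 0 := hlam.ne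
  have hc0 : c ≠ 0 := hc.ne
  have hca : c - a ≠ 0 := by nlinarith
  have h2ca : 2*c - a ≠ 0 := by nlinarith
  have h2ca' : c*2 - a ≠ 0 := by contrapose! h2ca; linarith
  have hApos : 0 < lam^2 + 1/α := by
    have h1 : 0 < lam^2 := by positivity
    have h2 : 0 < 1/α := by positivity
    linarith
  have hBpos : 0 < α*(c - a)*(2*c - a) := by
    nlinarith [mul_pos (mul_pos hα (show (0:ℝ) < a - c by linarith))
      (show (0:ℝ) < a - 2*c by linarith)]
  have hXpos : 0 < 4*c*(2*c - a) + d^2 := by nlinarith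
  have hs2 : Real.sqrt (4*c*(2*c - a) + d^2) ^ 2 = 4*c*(2*c - a) + d^2 :=
    Real.sq_sqrt hXpos.le
  have hspos : 0 < Real.sqrt (4*c*(2*c - a) + d^2) := Real.sqrt_pos.2 hXpos
  have hds : d < Real.sqrt (4*c*(2*c - a) + d^2) := by
    nlinarith [hs2, hspos, hd]
  have hρ₁pos : 0 < ρ₁ := by rw [hρ₁]; linarith
  have hρ₂pos : 0 < ρ₂ := by rw [hρ₂]; linarith
  have hsum0 : ρ₁ + ρ₂ ≠ 0 := by positivity
  have hprod : ρ₁ * ρ₂ = c*(2*c - a) := by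
    rw [hρ₁, hρ₂]; linear_combination hs2/4
  have hP3pos : 0 < α*ρ₁*(ρ₁ + ρ₂) := by positivity
  have hP4pos : 0 < α*ρ₂*(ρ₁ + ρ₂) := by positivity
  -- squares of the coefficients
  have hC1 : (lam / Real.sqrt (lam^2 + 1/α))^2 = lam^2/(lam^2 + 1/α) := by
    rw [div_pow, Real.sq_sqrt hApos.le]
  have hC2 : (1 / Real.sqrt (α*(c - a)*(2*c - a)))^2 = 1/(α*(c - a)*(2*c - a)) := by
    rw [div_pow, one_pow, Real.sq_sqrt hBpos.le]
  have hC3 : (1 / Real.sqrt (α*ρ₁*(ρ₁ + ρ₂)))^2 = 1/(α*ρ₁*(ρ₁ + ρ₂)) := by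
    rw [div_pow, one_pow, Real.sq_sqrt hP3pos.le]
  have hC4 : (1 / Real.sqrt (α*ρ₂*(ρ₁ + ρ₂)))^2 = 1/(α*ρ₂*(ρ₁ + ρ₂)) := by
    rw [div_pow, one_pow, Real.sq_sqrt hP4pos.le]
  have hC3' : (1 / Real.sqrt (α*ρ₁*(ρ₁ + ρ₂)))^2 = ρ₂/(α*(c*(2*c - a))*(ρ₁ + ρ₂)) := by
    rw [hC3, ← hprod]; field_simp
  have hC4' : (1 / Real.sqrt (α*ρ₂*(ρ₁ + ρ₂)))^2 = ρ₁/(α*(c*(2*c - a))*(ρ₁ + ρ₂)) := by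
    rw [hC4, ← hprod]; field_simp
  have hA' : lam^2 + 1/α = c*(c - a) := by linear_combination hrel
  have key : ∀ x : ℝ, x * lam * lam = x * (c*(c - a) - 1/α) := fun x => by
    rw [mul_assoc]; rw [show lam * lam = c*(c - a) - 1/α by linear_combination hrel]
  -- the three partial derivatives
  have hDu : HasDerivAt (fun t => f t v w)
      ((WithLp.equiv 2 (Fin 4 → ℂ)).symm
        ![((lam / Real.sqrt (lam^2 + 1/α) : ℝ) : ℂ) * (Complex.I * ((1/(α*lam) : ℝ) : ℂ))
            * Complex.exp (Complex.I * ((u/(α*lam) : ℝ) : ℂ)),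
          ((1 / Real.sqrt (α*(c - a)*(2*c - a)) : ℝ) : ℂ) * (-Complex.I * ((lam : ℝ) : ℂ))
            * Complex.exp (-Complex.I * ((lam*u - (c - a)*v : ℝ) : ℂ)),
          ((1 / Real.sqrt (α*ρ₁*(ρ₁ + ρ₂)) : ℝ) : ℂ) * (-Complex.I * ((lam : ℝ) : ℂ))
            * Complex.exp (-Complex.I * ((lam*u + c*v + ρ₁*w : ℝ) : ℂ)),
          ((1 / Real.sqrt (α*ρ₂*(ρ₁ + ρ₂)) : ℝ) : ℂ) * (-Complex.I * ((lam : ℝ) : ℂ))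
            * Complex.exp (-Complex.I * ((lam*u + c*v - ρ₂*w : ℝ) : ℂ))]) u := by
    have hfun : (fun t => f t v w) = fun t => (WithLp.equiv 2 (Fin 4 → ℂ)).symm
      ![((lam / Real.sqrt (lam^2 + 1/α) : ℝ) : ℂ)
          * Complex.exp (Complex.I * ((t/(α*lam) : ℝ) : ℂ)),
        ((1 / Real.sqrt (α*(c - a)*(2*c - a)) : ℝ) : ℂ)
          * Complex.exp (-Complex.I * ((lam*t - (c - a)*v : ℝ) : ℂ)),
        ((1 / Real.sqrt (α*ρ₁*(ρ₁ + ρ₂)) : ℝ) : ℂ)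
          * Complex.exp (-Complex.I * ((lam*t + c*v + ρ₁*w : ℝ) : ℂ)),
        ((1 / Real.sqrt (α*ρ₂*(ρ₁ + ρ₂)) : ℝ) : ℂ)
          * Complex.exp (-Complex.I * ((lam*t + c*v - ρ₂*w : ℝ) : ℂ))] :=
      funext fun t => hf t v w
    rw [hfun]
    have hF : HasDerivAt (fun t : ℝ =>
        (![((lam / Real.sqrt (lam^2 + 1/α) : ℝ) : ℂ)
            * Complex.exp (Complex.I * ((t/(α*lam) : ℝ) : ℂ)),
          ((1 / Real.sqrt (α*(c - a)*(2*c - a)) : ℝ) : ℂ)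
            * Complex.exp (-Complex.I * ((lam*t - (c - a)*v : ℝ) : ℂ)),
          ((1 / Real.sqrt (α*ρ₁*(ρ₁ + ρ₂)) : ℝ) : ℂ)
            * Complex.exp (-Complex.I * ((lam*t + c*v + ρ₁*w : ℝ) : ℂ)),
          ((1 / Real.sqrt (α*ρ₂*(ρ₁ + ρ₂)) : ℝ) : ℂ)
            * Complex.exp (-Complex.I * ((lam*t + c*v - ρ₂*w : ℝ) : ℂ))] : Fin 4 → ℂ))
        (![((lam / Real.sqrt (lam^2 + 1/α) : ℝ) : ℂ) * (Complex.I * ((1/(α*lam) : ℝ) : ℂ))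
            * Complex.exp (Complex.I * ((u/(α*lam) : ℝ) : ℂ)),
          ((1 / Real.sqrt (α*(c - a)*(2*c - a)) : ℝ) : ℂ) * (-Complex.I * ((lam : ℝ) : ℂ))
            * Complex.exp (-Complex.I * ((lam*u - (c - a)*v : ℝ) : ℂ)),
          ((1 / Real.sqrt (α*ρ₁*(ρ₁ + ρ₂)) : ℝ) : ℂ) * (-Complex.I * ((lam : ℝ) : ℂ))
            * Complex.exp (-Complex.I * ((lam*u + c*v + ρ₁*w : ℝ) : ℂ)),
          ((1 / Real.sqrt (α*ρ₂*(ρ₁ + ρ₂)) : ℝ) : ℂ) * (-Complex.I * ((lam : ℝ) : ℂ))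
            * Complex.exp (-Complex.I * ((lam*u + c*v - ρ₂*w : ℝ) : ℂ))]) u := by
      rw [hasDerivAt_pi]
      intro i
      fin_cases i <;>
        simp only [Matrix.cons_val_zero, Matrix.cons_val_one, Matrix.head_cons,
        Matrix.cons_val_two, Matrix.tail_cons, Matrix.cons_val_three, Fin.isValue]
      · exact aux_deriv _ _ _ _ _ ((hasDerivAt_id u).div_const (α*lam))
      · exact aux_deriv _ _ _ _ _ (L1 lam ((c - a)*v) u)
      · exact aux_deriv _ _ _ _ _ (L2 lam (c*v) (ρ₁*w) u)
      · exact aux_deriv _ _ _ _ _ (L3 lam (c*v) (ρ₂*w) u)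
    exact (((PiLp.continuousLinearEquiv 2 ℂ
      (fun _ : Fin 4 => ℂ)).symm.toContinuousLinearMap.restrictScalars ℝ).hasFDerivAt).comp_hasDerivAt u hF
  have hDv : HasDerivAt (fun t => f u t w)
      ((WithLp.equiv 2 (Fin 4 → ℂ)).symm
        ![((lam / Real.sqrt (lam^2 + 1/α) : ℝ) : ℂ) * (Complex.I * ((0 : ℝ) : ℂ))
            * Complex.exp (Complex.I * ((u/(α*lam) : ℝ) : ℂ)),
          ((1 / Real.sqrt (α*(c - a)*(2*c - a)) : ℝ) : ℂ) * (-Complex.I * ((-(c - a) : ℝ) : ℂ))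
            * Complex.exp (-Complex.I * ((lam*u - (c - a)*v : ℝ) : ℂ)),
          ((1 / Real.sqrt (α*ρ₁*(ρ₁ + ρ₂)) : ℝ) : ℂ) * (-Complex.I * ((c : ℝ) : ℂ))
            * Complex.exp (-Complex.I * ((lam*u + c*v + ρ₁*w : ℝ) : ℂ)),
          ((1 / Real.sqrt (α*ρ₂*(ρ₁ + ρ₂)) : ℝ) : ℂ) * (-Complex.I * ((c : ℝ) : ℂ))
            * Complex.exp (-Complex.I * ((lam*u + c*v - ρ₂*w : ℝ) : ℂ))]) v := by
    have hfun : (fun t => f u t w) = fun t => (WithLp.equiv 2 (Fin 4 → ℂ)).symm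
      ![((lam / Real.sqrt (lam^2 + 1/α) : ℝ) : ℂ)
          * Complex.exp (Complex.I * ((u/(α*lam) : ℝ) : ℂ)),
        ((1 / Real.sqrt (α*(c - a)*(2*c - a)) : ℝ) : ℂ)
          * Complex.exp (-Complex.I * ((lam*u - (c - a)*t : ℝ) : ℂ)),
        ((1 / Real.sqrt (α*ρ₁*(ρ₁ + ρ₂)) : ℝ) : ℂ)
          * Complex.exp (-Complex.I * ((lam*u + c*t + ρ₁*w : ℝ) : ℂ)),
        ((1 / Real.sqrt (α*ρ₂*(ρ₁ + ρ₂)) : ℝ) : ℂ)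
          * Complex.exp (-Complex.I * ((lam*u + c*t - ρ₂*w : ℝ) : ℂ))] :=
      funext fun t => hf u t w
    rw [hfun]
    have hF : HasDerivAt (fun t : ℝ =>
        (![((lam / Real.sqrt (lam^2 + 1/α) : ℝ) : ℂ)
            * Complex.exp (Complex.I * ((u/(α*lam) : ℝ) : ℂ)),
          ((1 / Real.sqrt (α*(c - a)*(2*c - a)) : ℝ) : ℂ)
            * Complex.exp (-Complex.I * ((lam*u - (c - a)*t : ℝ) : ℂ)),
          ((1 / Real.sqrt (α*ρ₁*(ρ₁ + ρ₂)) : ℝ) : ℂ)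
            * Complex.exp (-Complex.I * ((lam*u + c*t + ρ₁*w : ℝ) : ℂ)),
          ((1 / Real.sqrt (α*ρ₂*(ρ₁ + ρ₂)) : ℝ) : ℂ)
            * Complex.exp (-Complex.I * ((lam*u + c*t - ρ₂*w : ℝ) : ℂ))] : Fin 4 → ℂ))
        (![((lam / Real.sqrt (lam^2 + 1/α) : ℝ) : ℂ) * (Complex.I * ((0 : ℝ) : ℂ))
            * Complex.exp (Complex.I * ((u/(α*lam) : ℝ) : ℂ)),
          ((1 / Real.sqrt (α*(c - a)*(2*c - a)) : ℝ) : ℂ) * (-Complex.I * ((-(c - a) : ℝ) : ℂ))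
            * Complex.exp (-Complex.I * ((lam*u - (c - a)*v : ℝ) : ℂ)),
          ((1 / Real.sqrt (α*ρ₁*(ρ₁ + ρ₂)) : ℝ) : ℂ) * (-Complex.I * ((c : ℝ) : ℂ))
            * Complex.exp (-Complex.I * ((lam*u + c*v + ρ₁*w : ℝ) : ℂ)),
          ((1 / Real.sqrt (α*ρ₂*(ρ₁ + ρ₂)) : ℝ) : ℂ) * (-Complex.I * ((c : ℝ) : ℂ))
            * Complex.exp (-Complex.I * ((lam*u + c*v - ρ₂*w : ℝ) : ℂ))]) v := by
      rw [hasDerivAt_pi]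
      intro i
      fin_cases i <;>
        simp only [Matrix.cons_val_zero, Matrix.cons_val_one, Matrix.head_cons,
        Matrix.cons_val_two, Matrix.tail_cons, Matrix.cons_val_three, Fin.isValue]
      · exact aux_deriv _ _ _ _ _ (hasDerivAt_const v (u/(α*lam)))
      · exact aux_deriv _ _ _ _ _ (L4 (c - a) (lam*u) v)
      · exact aux_deriv _ _ _ _ _ (L5 c (lam*u) (ρ₁*w) v)
      · exact aux_deriv _ _ _ _ _ (L6 c (lam*u) (ρ₂*w) v)
    exact (((PiLp.continuousLinearEquiv 2 ℂ
      (fun _ : Fin 4 => ℂ)).symm.toContinuousLinearMap.restrictScalars ℝ).hasFDerivAt).comp_hasDerivAt v hF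
  have hDw : HasDerivAt (fun t => f u v t)
      ((WithLp.equiv 2 (Fin 4 → ℂ)).symm
        ![((lam / Real.sqrt (lam^2 + 1/α) : ℝ) : ℂ) * (Complex.I * ((0 : ℝ) : ℂ))
            * Complex.exp (Complex.I * ((u/(α*lam) : ℝ) : ℂ)),
          ((1 / Real.sqrt (α*(c - a)*(2*c - a)) : ℝ) : ℂ) * (-Complex.I * ((0 : ℝ) : ℂ))
            * Complex.exp (-Complex.I * ((lam*u - (c - a)*v : ℝ) : ℂ)),
          ((1 / Real.sqrt (α*ρ₁*(ρ₁ + ρ₂)) : ℝ) : ℂ) * (-Complex.I * ((ρ₁ : ℝ) : ℂ))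
            * Complex.exp (-Complex.I * ((lam*u + c*v + ρ₁*w : ℝ) : ℂ)),
          ((1 / Real.sqrt (α*ρ₂*(ρ₁ + ρ₂)) : ℝ) : ℂ) * (-Complex.I * ((-ρ₂ : ℝ) : ℂ))
            * Complex.exp (-Complex.I * ((lam*u + c*v - ρ₂*w : ℝ) : ℂ))]) w := by
    have hfun : (fun t => f u v t) = fun t => (WithLp.equiv 2 (Fin 4 → ℂ)).symm
      ![((lam / Real.sqrt (lam^2 + 1/α) : ℝ) : ℂ)
          * Complex.exp (Complex.I * ((u/(α*lam) : ℝ) : ℂ)),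
        ((1 / Real.sqrt (α*(c - a)*(2*c - a)) : ℝ) : ℂ)
          * Complex.exp (-Complex.I * ((lam*u - (c - a)*v : ℝ) : ℂ)),
        ((1 / Real.sqrt (α*ρ₁*(ρ₁ + ρ₂)) : ℝ) : ℂ)
          * Complex.exp (-Complex.I * ((lam*u + c*v + ρ₁*t : ℝ) : ℂ)),
        ((1 / Real.sqrt (α*ρ₂*(ρ₁ + ρ₂)) : ℝ) : ℂ)
          * Complex.exp (-Complex.I * ((lam*u + c*v - ρ₂*t : ℝ) : ℂ))] :=
      funext fun t => hf u v t
    rw [hfun]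
    have hF : HasDerivAt (fun t : ℝ =>
        (![((lam / Real.sqrt (lam^2 + 1/α) : ℝ) : ℂ)
            * Complex.exp (Complex.I * ((u/(α*lam) : ℝ) : ℂ)),
          ((1 / Real.sqrt (α*(c - a)*(2*c - a)) : ℝ) : ℂ)
            * Complex.exp (-Complex.I * ((lam*u - (c - a)*v : ℝ) : ℂ)),
          ((1 / Real.sqrt (α*ρ₁*(ρ₁ + ρ₂)) : ℝ) : ℂ)
            * Complex.exp (-Complex.I * ((lam*u + c*v + ρ₁*t : ℝ) : ℂ)),
          ((1 / Real.sqrt (α*ρ₂*(ρ₁ + ρ₂)) : ℝ) : ℂ)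
            * Complex.exp (-Complex.I * ((lam*u + c*v - ρ₂*t : ℝ) : ℂ))] : Fin 4 → ℂ))
        (![((lam / Real.sqrt (lam^2 + 1/α) : ℝ) : ℂ) * (Complex.I * ((0 : ℝ) : ℂ))
            * Complex.exp (Complex.I * ((u/(α*lam) : ℝ) : ℂ)),
          ((1 / Real.sqrt (α*(c - a)*(2*c - a)) : ℝ) : ℂ) * (-Complex.I * ((0 : ℝ) : ℂ))
            * Complex.exp (-Complex.I * ((lam*u - (c - a)*v : ℝ) : ℂ)),
          ((1 / Real.sqrt (α*ρ₁*(ρ₁ + ρ₂)) : ℝ) : ℂ) * (-Complex.I * ((ρ₁ : ℝ) : ℂ))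
            * Complex.exp (-Complex.I * ((lam*u + c*v + ρ₁*w : ℝ) : ℂ)),
          ((1 / Real.sqrt (α*ρ₂*(ρ₁ + ρ₂)) : ℝ) : ℂ) * (-Complex.I * ((-ρ₂ : ℝ) : ℂ))
            * Complex.exp (-Complex.I * ((lam*u + c*v - ρ₂*w : ℝ) : ℂ))]) w := by
      rw [hasDerivAt_pi]
      intro i
      fin_cases i <;>
        simp only [Matrix.cons_val_zero, Matrix.cons_val_one, Matrix.head_cons,
        Matrix.cons_val_two, Matrix.tail_cons, Matrix.cons_val_three, Fin.isValue]
      · exact aux_deriv _ _ _ _ _ (hasDerivAt_const w (u/(α*lam)))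
      · exact aux_deriv _ _ _ _ _ (hasDerivAt_const w (lam*u - (c - a)*v))
      · exact aux_deriv _ _ _ _ _ (L7 ρ₁ (lam*u + c*v) w)
      · exact aux_deriv _ _ _ _ _ (L4 ρ₂ (lam*u + c*v) w)
    exact (((PiLp.continuousLinearEquiv 2 ℂ
      (fun _ : Fin 4 => ℂ)).symm.toContinuousLinearMap.restrictScalars ℝ).hasFDerivAt).comp_hasDerivAt w hF
  have du := hDu.deriv
  have dv := hDv.deriv
  have dw := hDw.deriv
  refine ⟨?_, ?_, ?_, ?_, ?_, ?_⟩
  · rw [du, inner_vec,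
      aux_term _ (1/(α*lam)) (1/(α*lam)) (u/(α*lam)) Complex.I (Or.inl rfl),
      aux_term _ lam lam (lam*u - (c - a)*v) (-Complex.I) (Or.inr rfl),
      aux_term _ lam lam (lam*u + c*v + ρ₁*w) (-Complex.I) (Or.inr rfl),
      aux_term _ lam lam (lam*u + c*v - ρ₂*w) (-Complex.I) (Or.inr rfl)]
    simp only [← Complex.ofReal_add, Complex.ofReal_re]
    rw [hC1, hC2, hC3', hC4', hA']
    simp only [key]
    field_simp
    ring
  · rw [dv, inner_vec,
      aux_term _ 0 0 (u/(α*lam)) Complex.I (Or.inl rfl),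
      aux_term _ (-(c - a)) (-(c - a)) (lam*u - (c - a)*v) (-Complex.I) (Or.inr rfl),
      aux_term _ c c (lam*u + c*v + ρ₁*w) (-Complex.I) (Or.inr rfl),
      aux_term _ c c (lam*u + c*v - ρ₂*w) (-Complex.I) (Or.inr rfl)]
    simp only [← Complex.ofReal_add, Complex.ofReal_re]
    rw [hC2, hC3', hC4']
    field_simp
    ring
  · rw [dw, inner_vec,
      aux_term _ 0 0 (u/(α*lam)) Complex.I (Or.inl rfl),
      aux_term _ 0 0 (lam*u - (c - a)*v) (-Complex.I) (Or.inr rfl),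
      aux_term _ ρ₁ ρ₁ (lam*u + c*v + ρ₁*w) (-Complex.I) (Or.inr rfl),
      aux_term _ (-ρ₂) (-ρ₂) (lam*u + c*v - ρ₂*w) (-Complex.I) (Or.inr rfl)]
    simp only [← Complex.ofReal_add, Complex.ofReal_re]
    rw [hC3, hC4]
    field_simp
    ring
  · rw [du, dv, inner_vec,
      aux_term _ (1/(α*lam)) 0 (u/(α*lam)) Complex.I (Or.inl rfl),
      aux_term _ lam (-(c - a)) (lam*u - (c - a)*v) (-Complex.I) (Or.inr rfl),
      aux_term _ lam c (lam*u + c*v + ρ₁*w) (-Complex.I) (Or.inr rfl),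
      aux_term _ lam c (lam*u + c*v - ρ₂*w) (-Complex.I) (Or.inr rfl)]
    simp only [← Complex.ofReal_add, Complex.ofReal_re]
    rw [hC2, hC3', hC4']
    field_simp
    ring
  · rw [du, dw, inner_vec,
      aux_term _ (1/(α*lam)) 0 (u/(α*lam)) Complex.I (Or.inl rfl),
      aux_term _ lam 0 (lam*u - (c - a)*v) (-Complex.I) (Or.inr rfl),
      aux_term _ lam ρ₁ (lam*u + c*v + ρ₁*w) (-Complex.I) (Or.inr rfl),
      aux_term _ lam (-ρ₂) (lam*u + c*v - ρ₂*w) (-Complex.I) (Or.inr rfl)]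
    simp only [← Complex.ofReal_add, Complex.ofReal_re]
    rw [hC3, hC4]
    field_simp
    ring
  · rw [dv, dw, inner_vec,
      aux_term _ 0 0 (u/(α*lam)) Complex.I (Or.inl rfl),
      aux_term _ (-(c - a)) 0 (lam*u - (c - a)*v) (-Complex.I) (Or.inr rfl),
      aux_term _ c ρ₁ (lam*u + c*v + ρ₁*w) (-Complex.I) (Or.inr rfl),
      aux_term _ c (-ρ₂) (lam*u + c*v - ρ₂*w) (-Complex.I) (Or.inr rfl)]
    simp only [← Complex.ofReal_add, Complex.ofReal_re]
    rw [hC3, hC4]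
    field_simp
    ring
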